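/- In an acyclic advertisement graph with community semantics, a vertex n forwards community c if and only if there exists a directed path from some vertex m with c ∈ ac(m) to n such that no vertex strictly after m on the path removes c (c ∉ rc) and no vertex on the path after m has c ∈ ac (or equivalently, the last add is not followed by a remove). -/

import Mathlib

private lemma stmt11_aux {V C : Type*} (E : V → V → Prop) (ac rc : V → Set C)
    (Cf : V → C → Prop)
    (hC : ∀ n x, Cf n x ↔ (x ∈ ac n ∨ (x ∉ rc n ∧ ∃ m, E m n ∧ Cf m x)))
    (c : C) :
    ∀ (t : List V) (a n : V), Cf a c → List.Chain E a t → (∀ x ∈ t, c ∉ rc x) →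
      (a :: t).getLast? = some n → Cf n c := by
  intro t
  induction t with
  | nil =>
    intro a n ha _ _ hl
    simp only [List.getLast?_singleton, Option.some.injEq] at hl
    exact hl ▸ ha
  | cons b t' ih =>
    intro a n ha hch hrc hl
    rw [List.Chain, List.chain_cons] at hch
    have hb : Cf b c := (hC b c).mpr (Or.inr ⟨hrc b (by simp), a, hch.1, ha⟩)
    exact ih b n hb hch.2 (fun x hx => hrc x (by simp [hx]))
      (by simpa using hl)

/-- In an acyclic advertisement graph (`E` well-founded) with community semantics
given by the fixpoint equation `hC`, a vertex `n` forwards community `c` iff there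
is a directed path `v₀, v₁, …, vₖ = n` with `c ∈ ac v₀` and no vertex strictly
after `v₀` on the path removes or adds `c` (the case `c ∈ ac n` is the
single-vertex path `[n]`). -/
theorem stmt11 {V C : Type*} (E : V → V → Prop) (ac rc : V → Set C)
    (hdisj : ∀ n, Disjoint (ac n) (rc n))
    (hwf : WellFounded E)
    (Cf : V → C → Prop)
    (hC : ∀ n x, Cf n x ↔ (x ∈ ac n ∨ (x ∉ rc n ∧ ∃ m, E m n ∧ Cf m x)))
    (n : V) (c : C) :
    Cf n c ↔
      ∃ l : List V, l.getLast? = some n ∧ List.Chain' E l ∧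
        (∃ v₀, l.head? = some v₀ ∧ c ∈ ac v₀) ∧
        ∀ x ∈ l.tail, c ∉ rc x ∧ c ∉ ac x := by
  constructor
  · -- forward: well-founded induction on n
    induction n using hwf.induction with
    | _ n IH =>
      intro hn
      by_cases hac : c ∈ ac n
      · exact ⟨[n], by simp, List.isChain_singleton n, ⟨n, by simp, hac⟩, by simp⟩
      · rcases (hC n c).mp hn with h | ⟨hrc, m, hEm, hm⟩
        · exact absurd h hac
        · obtain ⟨l, hlast, hch, ⟨v₀, hhead, hv₀⟩, htail⟩ := IH m hEm hm
          have hlne : l ≠ [] := by rintro rfl; simp at hlast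
          refine ⟨l ++ [n], by simp, ?_, ⟨v₀, ?_, hv₀⟩, ?_⟩
          · rw [List.Chain', List.isChain_append]
            refine ⟨hch, by simp, ?_⟩
            intro x hx y hy
            simp only [List.head?_cons, Option.mem_def, Option.some.injEq] at hy
            rw [hlast] at hx
            simp only [Option.mem_def, Option.some.injEq] at hx
            subst hx; subst hy; exact hEm
          · rwa [List.head?_append_of_ne_nil _ hlne]
          · obtain ⟨a, t, rfl⟩ := List.exists_cons_of_ne_nil hlne
            intro x hx
            simp only [List.cons_append, List.tail_cons, List.mem_append,
              List.mem_singleton] at hx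
            rcases hx with hx | rfl
            · exact htail x hx
            · exact ⟨hrc, hac⟩
  · rintro ⟨l, hlast, hch, ⟨v₀, hhead, hv₀⟩, htail⟩
    obtain ⟨a, t, rfl⟩ := List.exists_cons_of_ne_nil
      (by rintro rfl; simp at hlast : l ≠ [])
    simp only [List.head?_cons, Option.some.injEq] at hhead
    subst hhead
    have ha : Cf a c := (hC a c).mpr (Or.inl hv₀)
    exact stmt11_aux E ac rc Cf hC c t a n ha hch
      (fun x hx => (htail x hx).1) hlast
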